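/- Let π_θ be the probability measure on ℝ^d with density proportional to ∏_{i=1}^d (τ² + θ_i²)⁻² restricted to the ℓ1-ball B₁(C₁) = {θ : ‖θ‖₁ ≤ C₁}, and for θ0 with ‖θ0‖₁ ≤ C₁ − 2dτ, let p0 be the probability measure with density proportional to π_θ(θ − θ0)·1_{B₁(2dτ)}(θ − θ0). Then for d ≥ 2, ∫ ‖θ − θ0‖₂² p0(dθ) ≤ 4dτ². -/

import Mathlib

open MeasureTheory Real

set_option maxHeartbeats 1000000
noncomputable section

/-- Number of nonzero coordinates of a vector (the ℓ0 "norm" `s* = ‖θ‖₀`). -/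
def sparsity {d : ℕ} (θ : Fin d → ℝ) : ℕ :=
  (Finset.univ.filter fun i => θ i ≠ 0).card

/-- Normalization of a measure into a probability measure. -/
def normMeasure {E : Type*} [MeasurableSpace E] (μ : Measure E) : Measure E :=
  (μ Set.univ)⁻¹ • μ

/-- The heavy-tailed prior on `θ`, with density proportional to `∏ i (τ² + θᵢ²)⁻²`
restricted to the ℓ1-ball `B₁(C₁)`. -/
def priorTheta (d : ℕ) (τ C1 : ℝ) : Measure (Fin d → ℝ) :=
  normMeasure <| volume.withDensity fun θ => ENNReal.ofReal
    (if ∑ i, |θ i| ≤ C1 then ∏ i, ((τ ^ 2 + θ i ^ 2) ^ 2)⁻¹ else 0)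

/-- The translated measure `p₀`, with density proportional to
`π_θ(θ - θ0) · 1_{B₁(2dτ)}(θ - θ0)`. -/
def translatedPrior (d : ℕ) (τ C1 : ℝ) (θ0 : Fin d → ℝ) : Measure (Fin d → ℝ) :=
  normMeasure <| volume.withDensity fun θ => ENNReal.ofReal
    (if (∑ i, |θ i - θ0 i|) ≤ C1 ∧ (∑ i, |θ i - θ0 i|) ≤ 2 * d * τ
      then ∏ i, ((τ ^ 2 + (θ i - θ0 i) ^ 2) ^ 2)⁻¹ else 0)


lemma cont_g {τ : ℝ} (hτ : 0 < τ) : Continuous fun x : ℝ => ((τ^2 + x^2)^2)⁻¹ := by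
  apply Continuous.inv₀ (by fun_prop)
  intro x; positivity

lemma ftc {τ : ℝ} (hτ : 0 < τ) (x : ℝ) :
    HasDerivAt (fun y : ℝ => y / (τ^2 + y^2)) ((τ^2 - x^2) * ((τ^2 + x^2)^2)⁻¹) x := by
  have h0 : τ^2 + x^2 ≠ 0 := by positivity
  have h1 : HasDerivAt (fun y : ℝ => y) 1 x := hasDerivAt_id x
  have h2 : HasDerivAt (fun y : ℝ => τ^2 + y^2) (2*x) x := by
    simpa using (hasDerivAt_pow 2 x).const_add (τ^2)
  have h := h1.div h2 h0
  exact h.congr_deriv (by rw [div_eq_mul_inv]; ring)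

lemma real1D {τ : ℝ} (hτ : 0 < τ) {r : ℝ} (hr : 0 ≤ r) :
    ∫ x in Set.Icc (-r) r, x ^ 2 * ((τ^2 + x^2)^2)⁻¹
      ≤ τ^2 * ∫ x in Set.Icc (-r) r, ((τ^2 + x^2)^2)⁻¹ := by
  have hle : (-r) ≤ r := by linarith
  have hg := cont_g hτ
  have h1 : Continuous fun x : ℝ => x^2 * ((τ^2+x^2)^2)⁻¹ := (continuous_pow 2).mul hg
  have key : ∫ x in (-r)..r, (τ^2 * ((τ^2+x^2)^2)⁻¹ - x^2 * ((τ^2+x^2)^2)⁻¹)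
      = r / (τ^2 + r^2) - (-r) / (τ^2 + (-r)^2) := by
    apply intervalIntegral.integral_eq_sub_of_hasDerivAt
    · intro x hx
      have h := ftc hτ x
      exact h.congr_deriv (by ring)
    · exact ((continuous_const.mul hg).sub h1).intervalIntegrable _ _
  have key2 : 0 ≤ ∫ x in (-r)..r, (τ^2 * ((τ^2+x^2)^2)⁻¹ - x^2 * ((τ^2+x^2)^2)⁻¹) := by
    rw [key, neg_sq, neg_div, sub_neg_eq_add]
    positivity
  rw [intervalIntegral.integral_sub (f := fun x : ℝ => τ^2 * ((τ^2+x^2)^2)⁻¹) ((continuous_const.mul hg).intervalIntegrable _ _)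
    (h1.intervalIntegrable _ _), intervalIntegral.integral_const_mul] at key2
  rw [MeasureTheory.integral_Icc_eq_integral_Ioc, ← intervalIntegral.integral_of_le hle,
    MeasureTheory.integral_Icc_eq_integral_Ioc, ← intervalIntegral.integral_of_le hle]
  linarith


lemma key1D_core {τ : ℝ} (hτ : 0 < τ) (r : ℝ) :
    ∫⁻ x : ℝ, ENNReal.ofReal (x ^ 2) *
        ENNReal.ofReal (if |x| ≤ r then ((τ^2 + x^2)^2)⁻¹ else 0)
      ≤ ENNReal.ofReal (τ^2) *
        ∫⁻ x : ℝ, ENNReal.ofReal (if |x| ≤ r then ((τ^2 + x^2)^2)⁻¹ else 0) := by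
  rcases lt_or_ge r 0 with hr | hr
  · have : ∀ x : ℝ, ¬ (|x| ≤ r) := fun x h => absurd (le_trans (abs_nonneg x) h) (not_le.2 hr)
    simp [this]
  · have hg := cont_g hτ
    have h1 : Continuous fun x : ℝ => x^2 * ((τ^2+x^2)^2)⁻¹ := (continuous_pow 2).mul hg
    have L : (∫⁻ x : ℝ, ENNReal.ofReal (x ^ 2) *
        ENNReal.ofReal (if |x| ≤ r then ((τ^2 + x^2)^2)⁻¹ else 0))
        = ∫⁻ x in Set.Icc (-r) r, ENNReal.ofReal (x^2 * ((τ^2 + x^2)^2)⁻¹) := by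
      rw [← lintegral_indicator measurableSet_Icc _]
      congr 1 with x
      rw [Set.indicator_apply]
      simp only [Set.mem_Icc, ← abs_le]
      split_ifs with h
      · rw [ENNReal.ofReal_mul (sq_nonneg x)]
      · simp
    have R : (∫⁻ x : ℝ, ENNReal.ofReal (if |x| ≤ r then ((τ^2 + x^2)^2)⁻¹ else 0))
        = ∫⁻ x in Set.Icc (-r) r, ENNReal.ofReal (((τ^2 + x^2)^2)⁻¹) := by
      rw [← lintegral_indicator measurableSet_Icc _]
      congr 1 with x
      rw [Set.indicator_apply]
      simp only [Set.mem_Icc, ← abs_le]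
      split_ifs with h <;> simp
    rw [L, R]
    have I1 : IntegrableOn (fun x : ℝ => x^2 * ((τ^2+x^2)^2)⁻¹) (Set.Icc (-r) r) :=
      h1.integrableOn_Icc
    have I2 : IntegrableOn (fun x : ℝ => ((τ^2+x^2)^2)⁻¹) (Set.Icc (-r) r) :=
      hg.integrableOn_Icc
    rw [← ofReal_integral_eq_lintegral_ofReal I1 (ae_of_all _ fun x => by positivity),
      ← ofReal_integral_eq_lintegral_ofReal I2 (ae_of_all _ fun x => by positivity),
      ← ENNReal.ofReal_mul (by positivity)]
    exact ENNReal.ofReal_le_ofReal (real1D hτ hr)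

lemma key1D {τ : ℝ} (hτ : 0 < τ) (a P r : ℝ) (hP : 0 ≤ P) :
    ∫⁻ x : ℝ, ENNReal.ofReal ((x - a) ^ 2) *
        ENNReal.ofReal (if |x - a| ≤ r then ((τ^2 + (x-a)^2)^2)⁻¹ * P else 0)
      ≤ ENNReal.ofReal (τ^2) *
        ∫⁻ x : ℝ, ENNReal.ofReal (if |x - a| ≤ r then ((τ^2 + (x-a)^2)^2)⁻¹ * P else 0) := by
  have ht1 := lintegral_sub_right_eq_self (μ := (volume : Measure ℝ))
    (fun u : ℝ => ENNReal.ofReal (u ^ 2) *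
      ENNReal.ofReal (if |u| ≤ r then ((τ^2 + u^2)^2)⁻¹ * P else 0)) a
  have ht2 := lintegral_sub_right_eq_self (μ := (volume : Measure ℝ))
    (fun u : ℝ => ENNReal.ofReal (if |u| ≤ r then ((τ^2 + u^2)^2)⁻¹ * P else 0)) a
  rw [ht1, ht2]
  have hsplit : ∀ u : ℝ, ENNReal.ofReal (if |u| ≤ r then ((τ^2 + u^2)^2)⁻¹ * P else 0)
      = ENNReal.ofReal (if |u| ≤ r then ((τ^2 + u^2)^2)⁻¹ else 0) * ENNReal.ofReal P := by
    intro u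
    split_ifs with h
    · rw [ENNReal.ofReal_mul (by positivity)]
    · simp
  simp_rw [hsplit]
  have hm : Measurable fun u : ℝ => ENNReal.ofReal (if |u| ≤ r then ((τ^2 + u^2)^2)⁻¹ else 0) := by
    apply Measurable.ennreal_ofReal
    exact Measurable.ite (measurableSet_le continuous_abs.measurable measurable_const)
      (cont_g hτ).measurable measurable_const
  calc ∫⁻ u, ENNReal.ofReal (u ^ 2) *
        (ENNReal.ofReal (if |u| ≤ r then ((τ^2 + u^2)^2)⁻¹ else 0) * ENNReal.ofReal P)
      = (∫⁻ u, ENNReal.ofReal (u ^ 2) *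
          ENNReal.ofReal (if |u| ≤ r then ((τ^2 + u^2)^2)⁻¹ else 0)) * ENNReal.ofReal P := by
        simp_rw [← mul_assoc]
        exact lintegral_mul_const _ ((measurable_id.pow_const 2).ennreal_ofReal.mul hm)
    _ ≤ (ENNReal.ofReal (τ^2) *
          ∫⁻ u, ENNReal.ofReal (if |u| ≤ r then ((τ^2 + u^2)^2)⁻¹ else 0)) * ENNReal.ofReal P :=
        mul_le_mul_left (key1D_core hτ r) _
    _ = ENNReal.ofReal (τ^2) *
          ∫⁻ u, ENNReal.ofReal (if |u| ≤ r then ((τ^2 + u^2)^2)⁻¹ else 0) * ENNReal.ofReal P := by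
        rw [mul_assoc, lintegral_mul_const _ hm]


lemma fubini_pi {n : ℕ} (i : Fin (n+1)) (F : (Fin (n+1) → ℝ) → ENNReal) (hF : Measurable F) :
    ∫⁻ θ, F θ = ∫⁻ y : Fin n → ℝ, ∫⁻ x : ℝ, F (i.insertNth x y) := by
  have mp := measurePreserving_piFinSuccAbove (fun _ : Fin (n+1) => (volume : Measure ℝ)) i
  have h1 := (mp.symm _).lintegral_comp hF
  have h2 := lintegral_prod_symm
    (μ := (volume : Measure ℝ)) (ν := (Measure.pi fun _ : Fin n => (volume : Measure ℝ)))
    (fun p => F ((MeasurableEquiv.piFinSuccAbove (fun _ => ℝ) i).symm p))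
    ((hF.comp (MeasurableEquiv.piFinSuccAbove (fun _ => ℝ) i).symm.measurable).aemeasurable)
  rw [volume_pi, ← h1, h2, volume_pi]
  rfl

lemma meas_rho {m : ℕ} {τ M : ℝ} (hτ : 0 < τ) (θ0 : Fin m → ℝ) :
    Measurable fun θ : Fin m → ℝ => ENNReal.ofReal
      (if (∑ k, |θ k - θ0 k|) ≤ M then ∏ k, ((τ^2 + (θ k - θ0 k)^2)^2)⁻¹ else 0) := by
  apply Measurable.ennreal_ofReal
  apply Measurable.ite
  · exact measurableSet_le (Finset.measurable_sum _ fun k _ =>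
      ((measurable_pi_apply k).sub measurable_const).abs) measurable_const
  · exact Finset.measurable_prod _ fun k _ =>
      (cont_g hτ).measurable.comp ((measurable_pi_apply k).sub measurable_const)
  · exact measurable_const

lemma stepC {n : ℕ} {τ : ℝ} (hτ : 0 < τ) (M : ℝ) (θ0 : Fin (n+1) → ℝ) (i : Fin (n+1)) :
    ∫⁻ θ : Fin (n+1) → ℝ, ENNReal.ofReal ((θ i - θ0 i)^2) *
        ENNReal.ofReal (if (∑ k, |θ k - θ0 k|) ≤ M then ∏ k, ((τ^2 + (θ k - θ0 k)^2)^2)⁻¹ else 0)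
      ≤ ENNReal.ofReal (τ^2) *
        ∫⁻ θ : Fin (n+1) → ℝ,
          ENNReal.ofReal (if (∑ k, |θ k - θ0 k|) ≤ M then ∏ k, ((τ^2 + (θ k - θ0 k)^2)^2)⁻¹ else 0) := by
  have hρ := meas_rho (M := M) hτ θ0
  have hF1 : Measurable fun θ : Fin (n+1) → ℝ => ENNReal.ofReal ((θ i - θ0 i)^2) *
      ENNReal.ofReal (if (∑ k, |θ k - θ0 k|) ≤ M then ∏ k, ((τ^2 + (θ k - θ0 k)^2)^2)⁻¹ else 0) := by
    apply Measurable.mul ?_ hρ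
    apply Measurable.ennreal_ofReal
    exact ((measurable_pi_apply i).sub measurable_const).pow_const 2
  rw [fubini_pi i _ hF1, fubini_pi i _ hρ,
    ← lintegral_const_mul' (ENNReal.ofReal (τ^2)) _ ENNReal.ofReal_ne_top]
  apply lintegral_mono
  intro y
  simp only [Fin.sum_univ_succAbove _ i, Fin.prod_univ_succAbove _ i,
    Fin.insertNth_apply_same, Fin.insertNth_apply_succAbove]
  simp only [← le_sub_iff_add_le]
  exact key1D hτ (θ0 i) _ _ (Finset.prod_nonneg fun j _ => by positivity)

lemma Zfin {m : ℕ} {τ M : ℝ} (hτ : 0 < τ) (θ0 : Fin m → ℝ) :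
    ∫⁻ θ : Fin m → ℝ, ENNReal.ofReal
      (if (∑ k, |θ k - θ0 k|) ≤ M then ∏ k, ((τ^2 + (θ k - θ0 k)^2)^2)⁻¹ else 0) ≠ ⊤ := by
  set S := Set.pi Set.univ fun k : Fin m => Set.Icc (θ0 k - M) (θ0 k + M) with hS
  set c := ENNReal.ofReal (((τ^2)^2)⁻¹ ^ m) with hc
  have hle : ∀ θ : Fin m → ℝ, ENNReal.ofReal
      (if (∑ k, |θ k - θ0 k|) ≤ M then ∏ k, ((τ^2 + (θ k - θ0 k)^2)^2)⁻¹ else 0)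
      ≤ S.indicator (fun _ => c) θ := by
    intro θ
    split_ifs with h
    · have hmem : θ ∈ S := by
        rw [hS, Set.mem_univ_pi]
        intro k
        have h1 : |θ k - θ0 k| ≤ M :=
          le_trans (Finset.single_le_sum (f := fun j => |θ j - θ0 j|)
            (fun j _ => abs_nonneg _) (Finset.mem_univ k)) h
        obtain ⟨h2, h3⟩ := abs_le.1 h1
        exact Set.mem_Icc.2 ⟨by linarith, by linarith⟩
      rw [Set.indicator_of_mem hmem]
      apply ENNReal.ofReal_le_ofReal
      calc ∏ k, ((τ^2 + (θ k - θ0 k)^2)^2)⁻¹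
          ≤ ∏ _k : Fin m, ((τ^2)^2)⁻¹ := by
            apply Finset.prod_le_prod (fun k _ => by positivity)
            intro k _
            gcongr
            nlinarith [sq_nonneg (θ k - θ0 k)]
        _ = ((τ^2)^2)⁻¹ ^ m := by
            rw [Finset.prod_const, Finset.card_univ, Fintype.card_fin]
    · simp only [ENNReal.ofReal_zero]
      exact zero_le
  have hSm : MeasurableSet S := MeasurableSet.univ_pi fun k => measurableSet_Icc
  have hvol : volume S = ∏ k : Fin m, ENNReal.ofReal (θ0 k + M - (θ0 k - M)) := by
    rw [hS, volume_pi_pi]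
    simp [Real.volume_Icc]
  refine ne_top_of_le_ne_top ?_ (lintegral_mono hle)
  rw [lintegral_indicator_const hSm]
  apply ENNReal.mul_ne_top ENNReal.ofReal_ne_top
  rw [hvol]
  exact (ENNReal.prod_lt_top (fun k _ => ENNReal.ofReal_lt_top)).ne

lemma Zpos {m : ℕ} {τ : ℝ} (hτ : 0 < τ) (θ0 : Fin m → ℝ) :
    ∫⁻ θ : Fin m → ℝ, ENNReal.ofReal
      (if (∑ k, |θ k - θ0 k|) ≤ 2 * (m : ℝ) * τ
        then ∏ k, ((τ^2 + (θ k - θ0 k)^2)^2)⁻¹ else 0) ≠ 0 := by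
  set T := Set.pi Set.univ fun k : Fin m => Set.Icc (θ0 k) (θ0 k + 2*τ) with hT
  set c := ENNReal.ofReal ((25 * τ^4)⁻¹ ^ m) with hc
  have hge : ∀ θ : Fin m → ℝ, T.indicator (fun _ => c) θ ≤ ENNReal.ofReal
      (if (∑ k, |θ k - θ0 k|) ≤ 2 * (m : ℝ) * τ
        then ∏ k, ((τ^2 + (θ k - θ0 k)^2)^2)⁻¹ else 0) := by
    intro θ
    by_cases hmem : θ ∈ T
    · have hbd : ∀ k, 0 ≤ θ k - θ0 k ∧ θ k - θ0 k ≤ 2*τ := by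
        intro k
        have := (Set.mem_univ_pi.1 hmem) k
        rw [Set.mem_Icc] at this
        exact ⟨by linarith [this.1], by linarith [this.2]⟩
      have hcond : (∑ k, |θ k - θ0 k|) ≤ 2 * (m : ℝ) * τ := by
        calc (∑ k, |θ k - θ0 k|) ≤ ∑ _k : Fin m, 2*τ := by
              apply Finset.sum_le_sum
              intro k _
              rw [abs_of_nonneg (hbd k).1]
              exact (hbd k).2
          _ = 2 * (m : ℝ) * τ := by
              rw [Finset.sum_const, Finset.card_univ, Fintype.card_fin, nsmul_eq_mul]; ring
      rw [Set.indicator_of_mem hmem, if_pos hcond]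
      apply ENNReal.ofReal_le_ofReal
      calc (25 * τ^4)⁻¹ ^ m = ∏ _k : Fin m, (25 * τ^4)⁻¹ := by
            rw [Finset.prod_const, Finset.card_univ, Fintype.card_fin]
        _ ≤ ∏ k, ((τ^2 + (θ k - θ0 k)^2)^2)⁻¹ := by
            apply Finset.prod_le_prod (fun k _ => by positivity)
            intro k _
            have h4 : (θ k - θ0 k)^2 ≤ 4*τ^2 := by nlinarith [(hbd k).1, (hbd k).2]
            gcongr
            nlinarith [h4, sq_nonneg τ, sq_nonneg (θ k - θ0 k)]
    · rw [Set.indicator_of_notMem hmem]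
      exact zero_le
  intro h0
  have hint : ∫⁻ θ : Fin m → ℝ, T.indicator (fun _ => c) θ = 0 :=
    le_antisymm (h0 ▸ lintegral_mono hge) zero_le
  have hTm : MeasurableSet T := MeasurableSet.univ_pi fun k => measurableSet_Icc
  rw [lintegral_indicator_const hTm] at hint
  have hvol : volume T = ENNReal.ofReal (2*τ) ^ m := by
    rw [hT, volume_pi_pi]
    simp [Real.volume_Icc]
  rw [hvol] at hint
  have hc0 : c ≠ 0 := by
    rw [hc, ne_eq, ENNReal.ofReal_eq_zero, not_le]
    positivity
  have hv0 : ENNReal.ofReal (2*τ) ^ m ≠ 0 :=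
    pow_ne_zero m (by rw [ne_eq, ENNReal.ofReal_eq_zero, not_le]; positivity)
  exact (mul_ne_zero hc0 hv0) hint


/-- Lemma `lema_boundfor_ell2`: for the translated measure `p₀` and `d ≥ 2`,
`∫ ‖θ - θ0‖₂² p₀(dθ) ≤ 4 d τ²`. -/
theorem statement_18 (d : ℕ) (hd : 2 ≤ d) (τ C1 : ℝ) (hτ : 0 < τ) (hdτ : 2 * d * τ < C1)
    (θ0 : Fin d → ℝ) (hθ0 : (∑ i, |θ0 i|) ≤ C1 - 2 * d * τ) :
    (∫ θ, ∑ i, (θ i - θ0 i) ^ 2 ∂(translatedPrior d τ C1 θ0)) ≤ 4 * d * τ ^ 2 := by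
  obtain ⟨n, rfl⟩ : ∃ n, d = n + 1 := ⟨d - 1, by omega⟩
  have hρden : (fun θ : Fin (n+1) → ℝ => ENNReal.ofReal
      (if (∑ i, |θ i - θ0 i|) ≤ C1 ∧ (∑ i, |θ i - θ0 i|) ≤ 2 * ((n+1 : ℕ) : ℝ) * τ
        then ∏ i, ((τ ^ 2 + (θ i - θ0 i) ^ 2) ^ 2)⁻¹ else 0))
      = fun θ : Fin (n+1) → ℝ => ENNReal.ofReal
      (if (∑ i, |θ i - θ0 i|) ≤ 2 * ((n+1 : ℕ) : ℝ) * τ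
        then ∏ i, ((τ ^ 2 + (θ i - θ0 i) ^ 2) ^ 2)⁻¹ else 0) :=
    funext fun θ => by
      rw [if_congr ⟨fun h => h.2, fun h => ⟨h.trans hdτ.le, h⟩⟩ rfl rfl]
  set ρ : (Fin (n+1) → ℝ) → ENNReal := fun θ => ENNReal.ofReal
      (if (∑ i, |θ i - θ0 i|) ≤ 2 * ((n+1 : ℕ) : ℝ) * τ
        then ∏ i, ((τ ^ 2 + (θ i - θ0 i) ^ 2) ^ 2)⁻¹ else 0) with hρdef
  set μ : Measure (Fin (n+1) → ℝ) := volume.withDensity ρ with hμdef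
  have hTP : translatedPrior (n+1) τ C1 θ0 = (μ Set.univ)⁻¹ • μ := by
    rw [translatedPrior, hρden, normMeasure]
  have hρm : Measurable ρ := meas_rho hτ θ0
  have hZ : μ Set.univ = ∫⁻ θ, ρ θ := by
    rw [hμdef, withDensity_apply _ MeasurableSet.univ, setLIntegral_univ]
  have hZ0 : μ Set.univ ≠ 0 := by rw [hZ]; exact Zpos hτ θ0
  have hZtop : μ Set.univ ≠ ⊤ := by rw [hZ]; exact Zfin hτ θ0
  have hfm : Measurable fun θ : Fin (n+1) → ℝ => ∑ k, (θ k - θ0 k)^2 :=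
    Finset.measurable_sum _ fun k _ =>
      ((measurable_pi_apply k).sub measurable_const).pow_const 2
  rw [hTP, integral_eq_lintegral_of_nonneg_ae (ae_of_all _ fun θ => by positivity)
    hfm.aestronglyMeasurable, lintegral_smul_measure,
    lintegral_withDensity_eq_lintegral_mul _ hρm hfm.ennreal_ofReal]
  have hsplit : ∀ θ : Fin (n+1) → ℝ,
      (ρ * fun x : Fin (n+1) → ℝ => ENNReal.ofReal (∑ k, (x k - θ0 k)^2)) θ
        = ∑ k, ENNReal.ofReal ((θ k - θ0 k)^2) * ρ θ := by
    intro θ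
    rw [Pi.mul_apply, ENNReal.ofReal_sum_of_nonneg (fun k _ => sq_nonneg _), mul_comm,
      Finset.sum_mul]
  have key : (∫⁻ θ, (ρ * fun x : Fin (n+1) → ℝ => ENNReal.ofReal (∑ k, (x k - θ0 k)^2)) θ)
      ≤ ((n+1 : ℕ) : ENNReal) * (ENNReal.ofReal (τ^2) * μ Set.univ) := by
    simp_rw [hsplit]
    rw [lintegral_finset_sum _ (fun k _ => by
      apply Measurable.mul ?_ hρm
      apply Measurable.ennreal_ofReal
      exact ((measurable_pi_apply k).sub measurable_const).pow_const 2)]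
    calc (∑ k : Fin (n+1), ∫⁻ θ, ENNReal.ofReal ((θ k - θ0 k)^2) * ρ θ)
        ≤ ∑ _k : Fin (n+1), ENNReal.ofReal (τ^2) * μ Set.univ := by
          apply Finset.sum_le_sum
          intro k _
          rw [hZ]
          exact stepC hτ _ θ0 k
      _ = ((n+1 : ℕ) : ENNReal) * (ENNReal.ofReal (τ^2) * μ Set.univ) := by
          rw [Finset.sum_const, Finset.card_univ, Fintype.card_fin, nsmul_eq_mul]
  have h2 : (μ Set.univ)⁻¹ * ∫⁻ θ, (ρ * fun x : Fin (n+1) → ℝ => ENNReal.ofReal (∑ k, (x k - θ0 k)^2)) θ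
      ≤ ((n+1 : ℕ) : ENNReal) * ENNReal.ofReal (τ^2) := by
    calc (μ Set.univ)⁻¹ * ∫⁻ θ, (ρ * fun x : Fin (n+1) → ℝ => ENNReal.ofReal (∑ k, (x k - θ0 k)^2)) θ
        ≤ (μ Set.univ)⁻¹ * (((n+1 : ℕ) : ENNReal) * (ENNReal.ofReal (τ^2) * μ Set.univ)) :=
          mul_le_mul_right key _
      _ = ((n+1 : ℕ) : ENNReal) * ENNReal.ofReal (τ^2) * ((μ Set.univ)⁻¹ * μ Set.univ) := by
          ring
      _ = ((n+1 : ℕ) : ENNReal) * ENNReal.ofReal (τ^2) := by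
          rw [ENNReal.inv_mul_cancel hZ0 hZtop, mul_one]
  calc ((μ Set.univ)⁻¹ * ∫⁻ θ, (ρ * fun x : Fin (n+1) → ℝ => ENNReal.ofReal (∑ k, (x k - θ0 k)^2)) θ).toReal
      ≤ (((n+1 : ℕ) : ENNReal) * ENNReal.ofReal (τ^2)).toReal :=
        ENNReal.toReal_mono (ENNReal.mul_ne_top (ENNReal.natCast_ne_top _)
          ENNReal.ofReal_ne_top) h2
    _ = ((n+1 : ℕ) : ℝ) * τ^2 := by
        rw [ENNReal.toReal_mul, ENNReal.toReal_ofReal (sq_nonneg τ), ENNReal.toReal_natCast]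
    _ ≤ 4 * ((n+1 : ℕ) : ℝ) * τ^2 := by
        have hnn : (0:ℝ) ≤ ((n+1 : ℕ) : ℝ) * τ^2 := by positivity
        linarith
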